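/- Let S̃ ⊆ ℂ be open, K holomorphic on S̃, and σ : [0,ε) → S̃ a C¹ curve. Then σ satisfies σ'(t) = exp(−K(σ(t)))·exp(K(σ(0)))·σ'(0) for all t if and only if J(σ(t)) = exp(K(σ(0)))·σ'(0)·t + J(σ(0)) for all t, where J is any holomorphic primitive of exp(K) on S̃. -/

import Mathlib

/-- Let `S̃ ⊆ ℂ` be open, `K` holomorphic on `S̃`, and `J` a holomorphic primitive of
`exp K` on `S̃`. A `C¹` curve `σ : [0,ε) → S̃` satisfies
`σ'(t) = exp(−K(σ(t)))·exp(K(σ(0)))·σ'(0)` for all `t` if and only if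
`J(σ(t)) = exp(K(σ(0)))·σ'(0)·t + J(σ(0))` for all `t`. -/
theorem geodesic_velocity_iff_affine (S : Set ℂ) (hS : IsOpen S)
    (K J : ℂ → ℂ) (hK : DifferentiableOn ℂ K S)
    (hJ : ∀ z ∈ S, HasDerivAt J (Complex.exp (K z)) z)
    (ε : ℝ) (hε : 0 < ε)
    (σ σ' : ℝ → ℂ)
    (hmem : ∀ t ∈ Set.Ico 0 ε, σ t ∈ S)
    (hσ : ∀ t ∈ Set.Ico 0 ε, HasDerivAt σ (σ' t) t)
    (hcont : ContinuousOn σ' (Set.Ico 0 ε)) :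
    (∀ t ∈ Set.Ico 0 ε,
        σ' t = Complex.exp (-(K (σ t))) * Complex.exp (K (σ 0)) * σ' 0) ↔
      (∀ t ∈ Set.Ico 0 ε,
        J (σ t) = Complex.exp (K (σ 0)) * σ' 0 * t + J (σ 0)) := by
  set c : ℂ := Complex.exp (K (σ 0)) * σ' 0 with hc
  -- derivative of J ∘ σ
  have hcomp : ∀ s ∈ Set.Ico 0 ε,
      HasDerivAt (fun u => J (σ u)) (σ' s • Complex.exp (K (σ s))) s := by
    intro s hs
    exact (hJ _ (hmem s hs)).scomp s (hσ s hs)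
  constructor
  · intro h t ht
    have hderiv0 : ∀ s ∈ Set.Ico 0 ε,
        HasDerivAt (fun u : ℝ => J (σ u) - (c * u + J (σ 0))) 0 s := by
      intro s hs
      have h2 : HasDerivAt (fun u : ℝ => c * (u : ℂ) + J (σ 0)) c s := by
        simpa using (((hasDerivAt_id s).ofReal_comp).const_mul c).add_const (J (σ 0))
      have h3 := (hcomp s hs).sub h2
      have hval : σ' s • Complex.exp (K (σ s)) - c = 0 := by
        rw [h s hs]
        have hne : Complex.exp (K (σ s)) ≠ 0 := Complex.exp_ne_zero _
        simp only [smul_eq_mul, Complex.exp_neg, hc]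
        field_simp
        simp
      rwa [hval] at h3
    -- constancy on [0, t]
    have hsub : Set.Icc (0:ℝ) t ⊆ Set.Ico 0 ε := fun x hx =>
      ⟨hx.1, lt_of_le_of_lt hx.2 ht.2⟩
    have hconst := constant_of_has_deriv_right_zero
      (f := fun u : ℝ => J (σ u) - (c * u + J (σ 0))) (a := 0) (b := t)
      (fun x hx => ((hderiv0 x (hsub hx)).continuousAt).continuousWithinAt)
      (fun x hx => ((hderiv0 x (hsub ⟨hx.1, le_of_lt hx.2⟩)).hasDerivWithinAt))
      t (Set.right_mem_Icc.2 ht.1)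
    simp only [Complex.ofReal_zero, mul_zero, zero_add, sub_self] at hconst
    linear_combination hconst
  · intro h t ht
    have h1 : HasDerivWithinAt (fun u => J (σ u)) (σ' t • Complex.exp (K (σ t)))
        (Set.Ico 0 ε) t := (hcomp t ht).hasDerivWithinAt
    have h2 : HasDerivWithinAt (fun u => J (σ u)) c (Set.Ico 0 ε) t := by
      have h2' : HasDerivWithinAt (fun u : ℝ => c * (u : ℂ) + J (σ 0)) c
          (Set.Ico 0 ε) t := by
        have : HasDerivAt (fun u : ℝ => c * (u : ℂ) + J (σ 0)) c t := by
          simpa using (((hasDerivAt_id t).ofReal_comp).const_mul c).add_const (J (σ 0))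
        exact this.hasDerivWithinAt
      exact h2'.congr (fun y hy => h y hy) (h t ht)
    have hu : UniqueDiffWithinAt ℝ (Set.Ico 0 ε) t := uniqueDiffOn_Ico 0 ε t ht
    have heq : σ' t • Complex.exp (K (σ t)) = c := by
      have := h1.derivWithin hu
      rw [h2.derivWithin hu] at this
      exact this.symm
    have hne : Complex.exp (K (σ t)) ≠ 0 := Complex.exp_ne_zero _
    have heq' : σ' t * Complex.exp (K (σ t)) = Complex.exp (K (σ 0)) * σ' 0 := by
      simpa [smul_eq_mul, hc] using heq
    rw [Complex.exp_neg]
    field_simp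
    linear_combination heq'
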